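/- Let n, q, k be positive integers with q ≥ 2, q | n, and q + 1 ≤ k ≤ (n+1)/2, and let p ≥ 2 with pq | n. Then C(n/q - 1, ⌊(k-1)/q⌋) > C(n/(pq) - 1, ⌊(k-1)/(pq)⌋). -/
import Mathlib

open Finset

/-- The family of `k`-element subsets of `G` whose elements sum to `x`. -/
def sumBlocks (G : Type) [AddCommGroup G] [Fintype G] [DecidableEq G]
    (k : ℕ) (x : G) : Finset (Finset G) :=
  Finset.univ.filter (fun T => T.card = k ∧ T.sum id = x)

/-- The family of `k`-element subsets of `G \ {0}` whose elements sum to `x`. -/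
def sumBlocksStar (G : Type) [AddCommGroup G] [Fintype G] [DecidableEq G]
    (k : ℕ) (x : G) : Finset (Finset G) :=
  Finset.univ.filter (fun T => T.card = k ∧ T.sum id = x ∧ (0 : G) ∉ T)

/-- `(G, B_k^x)` is a 1-design: the block family is nonempty and every
point of `G` lies in the same number of blocks. -/
def isOneDesign (G : Type) [AddCommGroup G] [Fintype G] [DecidableEq G]
    (k : ℕ) (x : G) : Prop :=
  sumBlocks G k x ≠ ∅ ∧ ∃ r : ℕ, ∀ y : G,
    ((sumBlocks G k x).filter (fun B => y ∈ B)).card = r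

/-- `e(x) = max {d : d ∣ exp(G), x ∈ dG}`. -/
noncomputable def eMax (G : Type) [AddCommGroup G] [Fintype G] [DecidableEq G] (x : G) : ℕ :=
  Nat.findGreatest (fun d => d ∣ AddMonoid.exponent G ∧ ∃ y : G, d • y = x)
    (AddMonoid.exponent G)

lemma choose_step (m r : ℕ) (h : 2 * (r + 1) ≤ m) : m.choose r < m.choose (r + 1) := by
  have hrm : r ≤ m := by omega
  have hpos : 0 < m.choose r := Nat.choose_pos hrm
  have key := Nat.choose_succ_right_eq m r
  have h2 : m.choose r * (r + 1) < m.choose (r + 1) * (r + 1) := by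
    rw [key]
    exact Nat.mul_lt_mul_of_pos_left (by omega) hpos
  exact Nat.lt_of_mul_lt_mul_right h2

lemma choose_strict (m i j : ℕ) (hij : i < j) (hj : 2 * j ≤ m) :
    m.choose i < m.choose j := by
  induction j with
  | zero => omega
  | succ j ih =>
    rcases Nat.lt_or_ge i j with h | h
    · exact lt_trans (ih h (by omega)) (choose_step m j hj)
    · have : i = j := by omega
      subst this
      exact choose_step m i hj

theorem stmt19 (n q k p : ℕ) (hq2 : 2 ≤ q) (hp2 : 2 ≤ p)
    (hqn : q ∣ n) (hpqn : p * q ∣ n)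
    (hk1 : q + 1 ≤ k) (hk2 : 2 * k ≤ n + 1) :
    (n / (p * q) - 1).choose ((k - 1) / (p * q)) < (n / q - 1).choose ((k - 1) / q) := by
  set m := n / q with hm
  set a := (k - 1) / q with ha
  set b := (k - 1) / (p * q) with hb
  have hqpos : 0 < q := by omega
  have hmn : q * m = n := Nat.mul_div_cancel' hqn
  have ha1 : 1 ≤ a := by
    rw [ha, Nat.le_div_iff_mul_le hqpos]; omega
  have hba : b < a := by
    have : b = a / p := by
      rw [hb, ha, Nat.mul_comm, ← Nat.div_div_eq_div_mul]
    rw [this]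
    exact Nat.div_lt_self (by omega) (by omega)
  have hqa : a * q ≤ k - 1 := Nat.div_mul_le_self (k - 1) q
  have h2a : 2 * a < m := by
    have h1 : 2 * a * q < m * q := by
      calc 2 * a * q = 2 * (a * q) := by ring
        _ ≤ 2 * (k - 1) := Nat.mul_le_mul_left 2 hqa
        _ ≤ n - 1 := by omega
        _ < q * m := by omega
        _ = m * q := Nat.mul_comm q m
    exact Nat.lt_of_mul_lt_mul_right h1
  have hdiv : n / (p * q) ≤ m := by
    rw [hm]
    exact Nat.div_le_div_left (Nat.le_mul_of_pos_left q (by omega)) hqpos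
  calc (n / (p * q) - 1).choose b ≤ (m - 1).choose b :=
        Nat.choose_le_choose b (by omega)
    _ < (m - 1).choose a := choose_strict (m - 1) b a hba (by omega)
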